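/- A real number C is a fixed point of the map F(Z) = exp(-iα/√(|Z - i/2|² - H))·(Z - i/2) - i/2 if and only if 2C·sin(θ/2) + cos(θ/2) = 0, where θ = α/√(C² + 1/4 - H), assuming C² + 1/4 > H. -/

import Mathlib

open Complex

/-- Fixed point condition for real C: 2C·sin(θ/2) + cos(θ/2) = 0 with
θ = α/√(C² + 1/4 - H). -/
theorem fixed_point_condition (α H C : ℝ) (hC : C ^ 2 + 1 / 4 - H > 0) :
    (Complex.exp (-(I * α) / Real.sqrt (‖(C : ℂ) - I / 2‖ ^ 2 - H))
        * ((C : ℂ) - I / 2) - I / 2 = (C : ℂ))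
    ↔ 2 * C * Real.sin (α / Real.sqrt (C ^ 2 + 1 / 4 - H) / 2)
        + Real.cos (α / Real.sqrt (C ^ 2 + 1 / 4 - H) / 2) = 0 := by
  have habs : ‖(C : ℂ) - I / 2‖ ^ 2 = C ^ 2 + 1 / 4 := by
    rw [Complex.sq_norm, Complex.normSq_apply]
    simp
    ring
  rw [habs]
  set s := Real.sqrt (C ^ 2 + 1 / 4 - H) with hs
  have hspos : 0 < s := Real.sqrt_pos.mpr hC
  set θ := α / s with hθ
  have harg : -(I * (α:ℂ)) / (s:ℂ) = ((-θ : ℝ) : ℂ) * I := by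
    have hsne : (s:ℂ) ≠ 0 := by exact_mod_cast hspos.ne'
    rw [hθ]
    push_cast
    field_simp
  rw [harg, Complex.exp_mul_I, ← Complex.ofReal_cos, ← Complex.ofReal_sin]
  rw [Complex.ext_iff]
  simp only [Complex.add_re, Complex.add_im, Complex.sub_re, Complex.sub_im,
    Complex.mul_re, Complex.mul_im, Complex.ofReal_re, Complex.ofReal_im,
    Complex.I_re, Complex.I_im, Complex.div_ofNat_re, Complex.div_ofNat_im]
  simp only [Real.sin_neg, Real.cos_neg]
  have hsin : Real.sin θ = 2 * Real.sin (θ/2) * Real.cos (θ/2) := by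
    rw [show θ = 2*(θ/2) by ring, Real.sin_two_mul]
    ring_nf
  have hcos : Real.cos θ = 1 - 2 * Real.sin (θ/2)^2 := by
    rw [show θ = 2*(θ/2) by ring, Real.cos_two_mul,
      ← Real.sin_sq_add_cos_sq (θ/2)]
    ring
  have hpy := Real.sin_sq_add_cos_sq (θ/2)
  set a := Real.sin (θ/2)
  set b := Real.cos (θ/2)
  rw [hsin, hcos]
  constructor
  · rintro ⟨h1, h2⟩
    have ha : a * (2*C*a + b) = 0 := by linear_combination -h1
    have hb : b * (2*C*a + b) = 0 := by linear_combination -h2 + hpy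
    linear_combination a*ha + b*hb - (2*C*a+b)*hpy
  · intro h
    constructor
    · linear_combination (-a)*h
    · linear_combination (-b)*h + hpy
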